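/- Let n be a positive integer and σ, τ permutations of {1,…,n}. Then in the multiparametric quon algebra A, a_{σ(n)}⋯a_{σ(1)} · a†_{τ(1)}⋯a†_{τ(n)} − v_n(σ,τ)·1 belongs to L + Rt, where v_n(σ,τ) := ∏ q_{σ(i),σ(j)}, the product over all pairs (i,j) with 1 ≤ i < j ≤ n and τ⁻¹(σ(i)) > τ⁻¹(σ(j)). (Equivalently, ⟨0| a_{σ(n)}⋯a_{σ(1)} a†_{τ(1)}⋯a†_{τ(n)} |0⟩ = v_n(σ,τ).) -/

import Mathlib

/-- The coefficient ring `R = ℂ[q_{i,j} : i,j ∈ ℕ⁺]`. -/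
abbrev QR : Type := MvPolynomial (ℕ+ × ℕ+) ℂ

/-- The quon relations `a_i a_j† = q_{i,j} a_j† a_i + δ_{i,j}` on the free
`R`-algebra on the symbols `a_i` (`Sum.inl i`) and `a_i†` (`Sum.inr i`). -/
inductive QuonRel : FreeAlgebra QR (ℕ+ ⊕ ℕ+) → FreeAlgebra QR (ℕ+ ⊕ ℕ+) → Prop
  | rel (i j : ℕ+) : QuonRel
      (FreeAlgebra.ι QR (Sum.inl i) * FreeAlgebra.ι QR (Sum.inr j))
      ((MvPolynomial.X (i, j) : QR) •
          (FreeAlgebra.ι QR (Sum.inr j) * FreeAlgebra.ι QR (Sum.inl i))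
        + if i = j then 1 else 0)

/-- The multiparametric quon algebra `A`. -/
abbrev QuonAlg : Type := RingQuot QuonRel

/-- The annihilation operator `a_i`. -/
noncomputable def ann (i : ℕ+) : QuonAlg :=
  RingQuot.mkAlgHom QR QuonRel (FreeAlgebra.ι QR (Sum.inl i))

/-- The creation operator `a_i†`. -/
noncomputable def cre (i : ℕ+) : QuonAlg :=
  RingQuot.mkAlgHom QR QuonRel (FreeAlgebra.ι QR (Sum.inr i))

/-- The left ideal `L = Σ_i A·a_i`, as an `R`-submodule of `A`. -/
noncomputable def leftIdeal : Submodule QR QuonAlg :=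
  Submodule.span QR {x : QuonAlg | ∃ y : QuonAlg, ∃ i : ℕ+, x = y * ann i}

/-- The right ideal `Rt = Σ_j a_j†·A`, as an `R`-submodule of `A`. -/
noncomputable def rightIdeal : Submodule QR QuonAlg :=
  Submodule.span QR {x : QuonAlg | ∃ y : QuonAlg, ∃ j : ℕ+, x = cre j * y}

lemma ann_mul_cre (i j : ℕ+) :
    ann i * cre j = (MvPolynomial.X (i, j) : QR) • (cre j * ann i)
      + if i = j then 1 else 0 := by
  have h := RingQuot.mkAlgHom_rel QR (QuonRel.rel i j)
  simp only [map_mul, map_add, map_smul, apply_ite (RingQuot.mkAlgHom QR QuonRel),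
    map_one, map_zero] at h
  simpa [ann, cre] using h

/-- `∏_{x ∈ l} q_{i,x}`. -/
noncomputable def qprod (i : ℕ+) (l : List ℕ+) : QR :=
  (l.map fun x => MvPolynomial.X (i, x)).prod

@[simp] lemma qprod_nil (i : ℕ+) : qprod i [] = 1 := rfl

@[simp] lemma qprod_cons (i j : ℕ+) (l : List ℕ+) :
    qprod i (j :: l) = MvPolynomial.X (i, j) * qprod i l := by
  simp [qprod]

/-- Push an annihilator through a product of creators. -/
lemma ann_mul_creProd (i : ℕ+) (js : List ℕ+) :
    ann i * (js.map cre).prod =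
      qprod i js • ((js.map cre).prod * ann i)
        + ∑ t : Fin js.length,
            if js.get t = i then
              qprod i (js.take t) • ((js.eraseIdx t).map cre).prod
            else 0 := by
  induction js with
  | nil => simp
  | cons j js ih =>
    have : ann i * ((j :: js).map cre).prod
        = (ann i * cre j) * (js.map cre).prod := by
      simp [mul_assoc]
    rw [this, ann_mul_cre, add_mul, smul_mul_assoc, mul_assoc, ih]
    simp only [List.length_cons]
    rw [Fin.sum_univ_succ]
    simp only [List.get_eq_getElem, Fin.val_zero, List.getElem_cons_zero,
      List.take_zero, qprod_nil, one_smul, List.eraseIdx_cons_zero, Fin.val_succ,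
      List.getElem_cons_succ, List.eraseIdx_cons_succ, List.take_succ_cons,
      List.map_cons, List.prod_cons, qprod_cons]
    rw [mul_add, smul_add, mul_smul_comm, smul_smul, ← mul_assoc, Finset.mul_sum,
      Finset.smul_sum, ite_mul, one_mul, zero_mul]
    have hsum : ∀ t : Fin js.length,
        (MvPolynomial.X (i, j) : QR) • (cre j *
            (if js[t.1] = i then
              qprod i (js.take t.1) • (List.map cre (js.eraseIdx t.1)).prod else 0))
          = if js[t.1] = i then
              ((MvPolynomial.X (i, j) : QR) * qprod i (js.take t.1)) •
                (cre j * (List.map cre (js.eraseIdx t.1)).prod)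
            else 0 := by
      intro t; split <;> simp [mul_smul_comm, smul_smul]
    simp only [hsum]
    have hij : (if j = i then ((js.map cre).prod) else 0)
        = (if i = j then ((js.map cre).prod) else 0) := by
      simp only [eq_comm]
    rw [hij]
    abel

/-- The vacuum expectation of `a_{i_k}⋯a_{i_1} a†_{j_1}⋯a†_{j_m}`. -/
noncomputable def vac : List ℕ+ → List ℕ+ → QR
  | [], js => if js = [] then 1 else 0
  | i :: is, js =>
      ∑ t : Fin js.length,
        if js.get t = i then qprod i (js.take t) * vac is (js.eraseIdx t) else 0

@[simp] lemma vac_nil (js : List ℕ+) : vac [] js = if js = [] then 1 else 0 := rfl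

lemma vac_cons (i : ℕ+) (is js : List ℕ+) :
    vac (i :: is) js = ∑ t : Fin js.length,
      if js.get t = i then qprod i (js.take t) * vac is (js.eraseIdx t) else 0 := rfl


lemma vac_spec (is : List ℕ+) : ∀ js : List ℕ+,
    (is.map ann).reverse.prod * (js.map cre).prod - vac is js • 1
      ∈ leftIdeal ⊔ rightIdeal := by
  induction is with
  | nil =>
    intro js
    cases js with
    | nil =>
      simp only [List.map_nil, List.reverse_nil, List.prod_nil, one_mul, vac_nil,
        if_true, one_smul]
      rw [show (1 : QuonAlg) - 1 = 0 from sub_self (1 : QuonAlg)]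
      exact Submodule.zero_mem _
    | cons j js =>
      simp only [List.map_nil, List.reverse_nil, List.prod_nil, one_mul, vac_nil,
        List.map_cons, List.prod_cons]
      rw [if_neg (List.cons_ne_nil j js), zero_smul,
        show (cre j * (js.map cre).prod - 0 : QuonAlg) = cre j * (js.map cre).prod
          from sub_zero (cre j * (js.map cre).prod)]
      exact Submodule.mem_sup_right
        (Submodule.subset_span ⟨(js.map cre).prod, j, rfl⟩)
  | cons i is ih =>
    intro js
    set P : QuonAlg := (is.map ann).reverse.prod with hP
    set C : QuonAlg := (js.map cre).prod with hC
    have hrev : ((i :: is).map ann).reverse.prod = P * ann i := by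
      simp [hP]
    have h1 : P * (ann i * C) = qprod i js • (P * C * ann i)
        + ∑ t : Fin js.length,
            if js.get t = i then
              qprod i (js.take t) • (P * ((js.eraseIdx t).map cre).prod)
            else 0 := by
      rw [hC, ann_mul_creProd, mul_add, mul_smul_comm, Finset.mul_sum, ← mul_assoc]
      congr 1
      refine Finset.sum_congr rfl fun t _ => ?_
      split <;> simp [mul_smul_comm]
    have h2 : ((vac (i :: is) js) • (1 : QuonAlg))
        = ∑ t : Fin js.length,
            if js.get t = i then
              (qprod i (js.take t) * vac is (js.eraseIdx t)) • (1 : QuonAlg)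
            else 0 := by
      rw [vac_cons, Finset.sum_smul]
      refine Finset.sum_congr rfl fun t _ => ?_
      split <;> simp
    have h3 : ∀ A S1 S2 : QuonAlg, A + S1 - S2 = A + (S1 - S2) := fun _ _ _ => by abel
    have h4 : ∀ f g : Fin js.length → QuonAlg,
        ((∑ t, f t) - ∑ t, g t) = ∑ t, (f t - g t) := fun f g =>
      (Finset.sum_sub_distrib (G := QuonAlg) (s := Finset.univ) (f := f) (g := g)).symm
    rw [hrev, mul_assoc, h1, h2, h3, h4]
    refine Submodule.add_mem _ ?_ (Submodule.sum_mem _ fun t _ => ?_)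
    · exact Submodule.mem_sup_left (Submodule.smul_mem _ _
        (Submodule.subset_span ⟨P * C, i, rfl⟩))
    · split
      · rw [mul_smul,
          show qprod i (js.take ↑t) • (P * ((js.eraseIdx ↑t).map cre).prod)
              - qprod i (js.take ↑t) • (vac is (js.eraseIdx ↑t) • (1 : QuonAlg))
              = qprod i (js.take ↑t) • (P * ((js.eraseIdx ↑t).map cre).prod
                  - vac is (js.eraseIdx ↑t) • (1 : QuonAlg))
            from (smul_sub (qprod i (js.take ↑t)) (P * ((js.eraseIdx ↑t).map cre).prod)
              (vac is (js.eraseIdx ↑t) • (1 : QuonAlg))).symm]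
        exact Submodule.smul_mem _ _ (ih (js.eraseIdx ↑t))
      · rw [show (0 : QuonAlg) - 0 = 0 from sub_zero (0 : QuonAlg)]
        exact Submodule.zero_mem _

section ListLemmas
variable {α : Type*} [DecidableEq α]

lemma eraseIdx_indexOf (a : α) : ∀ l : List α, l.eraseIdx (l.idxOf a) = l.erase a
  | [] => rfl
  | b :: l => by
    by_cases h : b = a
    · subst h; simp [List.idxOf_cons_self]
    · rw [List.idxOf_cons_ne _ h, List.eraseIdx_cons_succ, eraseIdx_indexOf a l,
        List.erase_cons_tail (a := a) (b := b) (by simpa using h)]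

lemma mem_take_iff_indexOf_lt {l : List α} (hl : l.Nodup) {x : α} {t : ℕ} :
    x ∈ l.take t ↔ x ∈ l ∧ l.idxOf x < t := by
  constructor
  · intro hx
    obtain ⟨k, hk, hkx⟩ := List.mem_iff_getElem.1 hx
    have hk' : k < t ∧ k < l.length := by
      simpa [List.length_take, lt_min_iff] using hk
    rw [List.getElem_take] at hkx
    subst hkx
    refine ⟨List.getElem_mem _, ?_⟩
    rw [List.Nodup.idxOf_getElem hl]
    exact hk'.1
  · rintro ⟨hx, hlt⟩
    have hidx : l.idxOf x < l.length := List.idxOf_lt_length_iff.2 hx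
    refine List.mem_iff_getElem.2 ⟨l.idxOf x, ?_, ?_⟩
    · simp only [List.length_take, lt_min_iff]; exact ⟨hlt, hidx⟩
    · rw [List.getElem_take]
      exact List.getElem_idxOf hidx

lemma indexOf_erase_lt_iff : ∀ {l : List α}, l.Nodup → ∀ {i x y : α}, x ∈ l → y ∈ l →
    x ≠ i → y ≠ i →
    ((l.erase i).idxOf x < (l.erase i).idxOf y ↔ l.idxOf x < l.idxOf y)
  | [], _, _, _, _, hx, _, _, _ => by simp at hx
  | a :: l, hl, i, x, y, hx, hy, hxi, hyi => by
    by_cases hai : a = i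
    · subst hai
      rw [List.erase_cons_head, List.idxOf_cons_ne _ (Ne.symm hxi),
        List.idxOf_cons_ne _ (Ne.symm hyi)]
      omega
    · rw [List.erase_cons_tail (a := i) (b := a) (by simp [hai])]
      by_cases hxa : a = x
      · rw [List.idxOf_cons_eq _ hxa, List.idxOf_cons_eq _ hxa]
        by_cases hya : a = y
        · rw [List.idxOf_cons_eq _ hya, List.idxOf_cons_eq _ hya]
        · rw [List.idxOf_cons_ne _ hya, List.idxOf_cons_ne _ hya]
          omega
      · rw [List.idxOf_cons_ne _ hxa, List.idxOf_cons_ne _ hxa]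
        by_cases hya : a = y
        · rw [List.idxOf_cons_eq _ hya, List.idxOf_cons_eq _ hya]
          omega
        · rw [List.idxOf_cons_ne _ hya, List.idxOf_cons_ne _ hya]
          have hx' : x ∈ l := (List.mem_cons.1 hx).resolve_left fun h => hxa h.symm
          have hy' : y ∈ l := (List.mem_cons.1 hy).resolve_left fun h => hya h.symm
          have := indexOf_erase_lt_iff (List.nodup_cons.1 hl).2 hx' hy' hxi hyi
          omega

end ListLemmas

noncomputable def vacF (is js : List ℕ+) : QR :=
  ∏ x ∈ is.toFinset, ∏ y ∈ is.toFinset,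
    if is.idxOf x < is.idxOf y ∧ js.idxOf y < js.idxOf x then
      MvPolynomial.X (x, y) else 1

lemma vac_eq_vacF : ∀ is : List ℕ+, is.Nodup → ∀ js : List ℕ+, is.Perm js →
    vac is js = vacF is js := by
  intro is
  induction is with
  | nil =>
    intro _ js h
    have : js = [] := h.symm.eq_nil
    subst this
    simp [vacF]
  | cons i is ih =>
    intro h1 js h
    obtain ⟨hi_not, hnd⟩ := List.nodup_cons.1 h1
    have hjsnd : js.Nodup := h.nodup_iff.1 h1
    have hij : i ∈ js := h.subset (List.mem_cons_self (a := i) (l := is))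
    have ht : js.idxOf i < js.length := List.idxOf_lt_length_iff.2 hij
    set t := js.idxOf i with hT
    have hget : js.get ⟨t, ht⟩ = i := by
      rw [List.get_eq_getElem]
      exact List.getElem_idxOf ht
    have hcol : vac (i :: is) js = qprod i (js.take t) * vac is (js.erase i) := by
      rw [vac_cons]
      rw [Fintype.sum_eq_single (⟨t, ht⟩ : Fin js.length) ?_]
      · rw [if_pos hget, ← eraseIdx_indexOf i js]
      · intro u hu
        rw [if_neg]
        intro hgu
        apply hu
        have h2 : js.idxOf (js.get u) = u := by
          rw [List.get_eq_getElem]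
          exact List.Nodup.idxOf_getElem hjsnd _ u.isLt
        apply Fin.ext
        rw [← h2, hgu]
    have hperm' : is.Perm (js.erase i) := (h.trans (List.perm_cons_erase hij)).cons_inv
    rw [hcol, ih hnd _ hperm']
    have hiS : i ∉ is.toFinset := fun hc => hi_not (List.mem_toFinset.1 hc)
    simp only [vacF, List.toFinset_cons]
    rw [Finset.prod_insert hiS]
    -- the `x = i` factor
    have e1 : (∏ y ∈ insert i is.toFinset,
        if (i :: is).idxOf i < (i :: is).idxOf y ∧ js.idxOf y < js.idxOf i then
          (MvPolynomial.X (i, y) : QR) else 1) = qprod i (js.take t) := by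
      rw [Finset.prod_insert hiS, if_neg (by simp), one_mul]
      have hcongr : ∀ y ∈ is.toFinset,
          (if (i :: is).idxOf i < (i :: is).idxOf y ∧ js.idxOf y < js.idxOf i then
            (MvPolynomial.X (i, y) : QR) else 1)
          = if js.idxOf y < t then (MvPolynomial.X (i, y) : QR) else 1 := by
        intro y hy
        have hyi : y ≠ i := fun hc => hiS (hc ▸ hy)
        rw [List.idxOf_cons_self, List.idxOf_cons_ne _ (Ne.symm hyi)]
        simp [Nat.succ_pos, hT]
      rw [Finset.prod_congr rfl hcongr, ← Finset.prod_filter]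
      have htake : (js.take t).toFinset
          = is.toFinset.filter (fun y => js.idxOf y < t) := by
        ext y
        simp only [List.mem_toFinset, Finset.mem_filter]
        rw [mem_take_iff_indexOf_lt hjsnd]
        constructor
        · rintro ⟨hyjs, hlt⟩
          have hyi : y ≠ i := fun hc => by rw [hc] at hlt; omega
          have hmem : y ∈ i :: is := h.mem_iff.2 hyjs
          exact ⟨(List.mem_cons.1 hmem).resolve_left hyi, hlt⟩
        · rintro ⟨hyis, hlt⟩
          exact ⟨h.subset (List.mem_cons_of_mem _ hyis), hlt⟩
      rw [← htake, qprod]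
      exact List.prod_toFinset _ (hjsnd.sublist (List.take_sublist t js))
    rw [e1]
    congr 1
    -- the remaining double product
    refine Finset.prod_congr rfl fun x hx => ?_
    have hxi : x ≠ i := fun hc => hiS (hc ▸ hx)
    rw [Finset.prod_insert hiS]
    have hfxi : (if (i :: is).idxOf x < (i :: is).idxOf i ∧
        js.idxOf i < js.idxOf x then (MvPolynomial.X (x, i) : QR) else 1) = 1 := by
      rw [if_neg]
      rw [List.idxOf_cons_self, List.idxOf_cons_ne _ (Ne.symm hxi)]
      simp
    rw [hfxi, one_mul]
    refine Finset.prod_congr rfl fun y hy => ?_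
    have hyi : y ≠ i := fun hc => hiS (hc ▸ hy)
    have hxjs : x ∈ js := h.subset (List.mem_cons_of_mem _ (List.mem_toFinset.1 hx))
    have hyjs : y ∈ js := h.subset (List.mem_cons_of_mem _ (List.mem_toFinset.1 hy))
    rw [List.idxOf_cons_ne _ (Ne.symm hxi), List.idxOf_cons_ne _ (Ne.symm hyi)]
    refine if_congr ?_ rfl rfl
    rw [indexOf_erase_lt_iff hjsnd hyjs hxjs hyi hxi]
    omega

lemma vac_eq_big (n : ℕ) (σ τ : Equiv.Perm (Fin n)) :
    vac (List.ofFn fun u : Fin n => ((σ u : ℕ).succPNat))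
        (List.ofFn fun u : Fin n => ((τ u : ℕ).succPNat))
      = ∏ p ∈ Finset.univ.filter
            (fun p : Fin n × Fin n => p.1 < p.2 ∧ τ⁻¹ (σ p.2) < τ⁻¹ (σ p.1)),
          (MvPolynomial.X ((σ p.1 : ℕ).succPNat, (σ p.2 : ℕ).succPNat) : QR) := by
  set f : Fin n → ℕ+ := fun u => ((σ u : ℕ).succPNat) with hf
  set g : Fin n → ℕ+ := fun u => ((τ u : ℕ).succPNat) with hg
  have hfinj : Function.Injective f := by
    intro a b hab
    simp only [hf, Nat.succPNat_inj] at hab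
    exact σ.injective (Fin.ext hab)
  have hginj : Function.Injective g := by
    intro a b hab
    simp only [hg, Nat.succPNat_inj] at hab
    exact τ.injective (Fin.ext hab)
  have hnis : (List.ofFn f).Nodup := List.nodup_ofFn.2 hfinj
  have hnjs : (List.ofFn g).Nodup := List.nodup_ofFn.2 hginj
  have hperm : (List.ofFn f).Perm (List.ofFn g) := by
    rw [List.perm_ext_iff_of_nodup hnis hnjs]
    intro a
    rw [List.mem_ofFn, List.mem_ofFn]
    constructor
    · rintro ⟨u, rfl⟩
      exact ⟨τ⁻¹ (σ u), by simp [hf, hg]⟩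
    · rintro ⟨u, rfl⟩
      exact ⟨σ⁻¹ (τ u), by simp [hf, hg]⟩
  rw [vac_eq_vacF _ hnis _ hperm]
  have hlen : (List.ofFn f).length = n := List.length_ofFn (f := f)
  have hleng : (List.ofFn g).length = n := List.length_ofFn (f := g)
  have hidx_is : ∀ u : Fin n, (List.ofFn f).idxOf (f u) = (u : ℕ) := by
    intro u
    have hu : (u : ℕ) < (List.ofFn f).length := by rw [hlen]; exact u.isLt
    have he : (List.ofFn f)[(u : ℕ)] = f u := by
      rw [List.getElem_ofFn]
    rw [← he, List.Nodup.idxOf_getElem hnis]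
  have hidx_js : ∀ u : Fin n, (List.ofFn g).idxOf (f u) = ((τ⁻¹ (σ u) : Fin n) : ℕ) := by
    intro u
    have hu : (((τ⁻¹ (σ u) : Fin n)) : ℕ) < (List.ofFn g).length := by
      rw [hleng]; exact (τ⁻¹ (σ u)).isLt
    have he : (List.ofFn g)[(((τ⁻¹ (σ u) : Fin n)) : ℕ)] = f u := by
      rw [List.getElem_ofFn]
      simp [hf, hg]
    rw [← he, List.Nodup.idxOf_getElem hnjs]
  rw [vacF]
  rw [← Finset.prod_product'
    (f := fun x y => if (List.ofFn f).idxOf x < (List.ofFn f).idxOf y ∧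
      (List.ofFn g).idxOf y < (List.ofFn g).idxOf x then (MvPolynomial.X (x, y) : QR) else 1)]
  rw [← Finset.prod_filter]
  refine (Finset.prod_bij (fun p _ => ((f p.1, f p.2) : ℕ+ × ℕ+)) ?_ ?_ ?_ ?_).symm
  · rintro ⟨p1, p2⟩ hp
    rw [Finset.mem_filter] at hp ⊢
    obtain ⟨-, hlt, hinv⟩ := hp
    refine ⟨Finset.mem_product.2 ⟨?_, ?_⟩, ?_, ?_⟩
    · exact List.mem_toFinset.2 ((List.mem_ofFn (f := f)).2 ⟨p1, rfl⟩)
    · exact List.mem_toFinset.2 ((List.mem_ofFn (f := f)).2 ⟨p2, rfl⟩)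
    · rw [hidx_is, hidx_is]; exact hlt
    · rw [hidx_js, hidx_js]; exact hinv
  · rintro ⟨p1, p2⟩ hp ⟨q1, q2⟩ hq hpq
    rw [Prod.mk.injEq] at hpq
    exact Prod.ext (hfinj hpq.1) (hfinj hpq.2)
  · rintro ⟨x, y⟩ hxy
    rw [Finset.mem_filter, Finset.mem_product] at hxy
    obtain ⟨⟨hx, hy⟩, hc1, hc2⟩ := hxy
    obtain ⟨u, hu⟩ := (List.mem_ofFn (f := f)).1 (List.mem_toFinset.1 hx)
    obtain ⟨v, hv⟩ := (List.mem_ofFn (f := f)).1 (List.mem_toFinset.1 hy)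
    refine ⟨(u, v), ?_, ?_⟩
    · rw [Finset.mem_filter]
      subst hu hv
      rw [hidx_is, hidx_is] at hc1
      rw [hidx_js, hidx_js] at hc2
      exact ⟨Finset.mem_univ _, hc1, hc2⟩
    · show (f u, f v) = (x, y)
      rw [hu, hv]
  · rintro ⟨p1, p2⟩ hp
    rfl

/-- `⟨0| a_{σ(n)}⋯a_{σ(1)} a†_{τ(1)}⋯a†_{τ(n)} |0⟩ = v_n(σ,τ)`, i.e.
`a_{σ(n)}⋯a_{σ(1)}·a†_{τ(1)}⋯a†_{τ(n)} − v_n(σ,τ)·1 ∈ L + Rt`, where the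
element `u ∈ {1,…,n}` is identified with the positive integer `u`. -/
theorem braket_eq_vn (n : ℕ) (hn : 0 < n) (σ τ : Equiv.Perm (Fin n)) :
    (List.ofFn fun u : Fin n => ann ((σ u : ℕ).succPNat)).reverse.prod *
        (List.ofFn fun u : Fin n => cre ((τ u : ℕ).succPNat)).prod
      - (∏ p ∈ Finset.univ.filter
            (fun p : Fin n × Fin n => p.1 < p.2 ∧ τ⁻¹ (σ p.2) < τ⁻¹ (σ p.1)),
          (MvPolynomial.X ((σ p.1 : ℕ).succPNat, (σ p.2 : ℕ).succPNat) : QR)) •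
        (1 : QuonAlg)
      ∈ leftIdeal ⊔ rightIdeal := by
  have h1 : (List.ofFn fun u : Fin n => ann ((σ u : ℕ).succPNat))
      = (List.ofFn fun u : Fin n => ((σ u : ℕ).succPNat)).map ann := by
    rw [List.map_ofFn]
    rfl
  have h2 : (List.ofFn fun u : Fin n => cre ((τ u : ℕ).succPNat))
      = (List.ofFn fun u : Fin n => ((τ u : ℕ).succPNat)).map cre := by
    rw [List.map_ofFn]
    rfl
  rw [h1, h2, ← vac_eq_big n σ τ]
  exact vac_spec _ _
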